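/- Let n ≥ 1 and let G₁, …, Gₙ be independent ℕ-valued random variables, each geometrically distributed with parameter 1/2, i.e., P(Gⱼ = k) = 2^{−(k+1)} for every k ∈ ℕ. Then the expected value of max(G₁, …, Gₙ) is at most log₂(n) + 1. -/

import Mathlib

open MeasureTheory ProbabilityTheory

private lemma logb_aux' {x : ℝ} (h1 : 1 ≤ x) (h2 : x ≤ 2) : x ≤ 1 + Real.logb 2 x := by
  have hc := strictConcaveOn_log_Ioi.concaveOn
  have h := hc.2 (show (1:ℝ) ∈ Set.Ioi (0:ℝ) from Set.mem_Ioi.mpr one_pos)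
    (show (2:ℝ) ∈ Set.Ioi (0:ℝ) from Set.mem_Ioi.mpr two_pos)
    (show (0:ℝ) ≤ 2 - x by linarith) (show (0:ℝ) ≤ x - 1 by linarith)
    (show (2-x) + (x-1) = 1 by ring)
  simp only [smul_eq_mul, Real.log_one, mul_zero, mul_one, zero_add] at h
  have h' : 2 - x + (x - 1) * 2 = x := by ring
  rw [h'] at h
  have hlog2 : 0 < Real.log 2 := Real.log_pos one_lt_two
  have : x - 1 ≤ Real.logb 2 x := by
    rw [Real.logb, le_div_iff₀ hlog2]; linarith
  linarith

private lemma geom_tail' {Ω : Type*} [MeasurableSpace Ω] (μ : Measure Ω)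
    (g : Ω → ℕ) (hg : Measurable g)
    (hgeo : ∀ k : ℕ, μ {ω | g ω = k} = (2 : ENNReal)⁻¹ ^ (k + 1)) (k : ℕ) :
    μ {ω | k < g ω} = (2 : ENNReal)⁻¹ ^ (k + 1) := by
  have hset : {ω | k < g ω} = ⋃ i : ℕ, {ω | g ω = k + 1 + i} := by
    ext ω; simp only [Set.mem_setOf_eq, Set.mem_iUnion]
    constructor
    · intro h; exact ⟨g ω - (k+1), by omega⟩
    · rintro ⟨i, hi⟩; omega
  have hdisj : Pairwise (Function.onFun Disjoint fun i => {ω | g ω = k + 1 + i}) := by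
    intro a b hab
    refine Set.disjoint_left.mpr ?_
    rintro ω h1 h2
    simp only [Set.mem_setOf_eq] at h1 h2
    exact hab (by omega)
  have hmeas : ∀ i : ℕ, MeasurableSet {ω | g ω = k + 1 + i} := fun i =>
    hg (measurableSet_singleton _)
  rw [hset, measure_iUnion hdisj hmeas]
  have : ∀ i : ℕ, μ {ω | g ω = k + 1 + i} = (2:ENNReal)⁻¹ ^ (k+1) * (2:ENNReal)⁻¹ ^ (i+1) := by
    intro i; rw [hgeo, ← pow_add]; ring_nf
  simp_rw [this]
  rw [ENNReal.tsum_mul_left]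
  have hsum : ∑' i : ℕ, (2:ENNReal)⁻¹ ^ (i+1) = 1 := by
    simp_rw [pow_succ']
    rw [ENNReal.tsum_mul_left, ENNReal.tsum_geometric]
    rw [ENNReal.one_sub_inv_two]
    simp [ENNReal.inv_mul_cancel]
  rw [hsum, mul_one]

private lemma lintegral_nat_eq_tsum' {Ω : Type*} [MeasurableSpace Ω] (μ : Measure Ω)
    (M : Ω → ℕ) (hM : Measurable M) :
    ∫⁻ ω, (M ω : ENNReal) ∂μ = ∑' k : ℕ, μ {ω | k < M ω} := by
  have hTk : ∀ k : ℕ, MeasurableSet {ω | k < M ω} := fun k =>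
    hM (measurableSet_Ioi (a := k))
  have hpt : ∀ ω, (M ω : ENNReal) = ∑' k : ℕ, Set.indicator {ω | k < M ω} (fun _ => (1:ENNReal)) ω := by
    intro ω
    have : ∀ k : ℕ, Set.indicator {ω | k < M ω} (fun _ => (1:ENNReal)) ω
        = if k ∈ Finset.range (M ω) then (1:ENNReal) else 0 := by
      intro k
      simp [Set.indicator, Finset.mem_range]
    simp_rw [this]
    rw [tsum_eq_sum (s := Finset.range (M ω)) (fun b hb => by simp [hb])]
    rw [Finset.sum_ite_mem, Finset.inter_self, Finset.sum_const, Finset.card_range,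
      nsmul_eq_mul, mul_one]
  calc ∫⁻ ω, (M ω : ENNReal) ∂μ
      = ∫⁻ ω, ∑' k : ℕ, Set.indicator {ω | k < M ω} (fun _ => (1:ENNReal)) ω ∂μ := by
        simp_rw [← hpt]
    _ = ∑' k : ℕ, ∫⁻ ω, Set.indicator {ω | k < M ω} (fun _ => (1:ENNReal)) ω ∂μ :=
        lintegral_tsum fun k => ((measurable_const.indicator (hTk k)).aemeasurable)
    _ = ∑' k : ℕ, μ {ω | k < M ω} := by
        congr 1; ext k
        rw [lintegral_indicator_const (hTk k), one_mul]

theorem expected_max_geometric_le {Ω : Type*} [MeasurableSpace Ω]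
    (μ : Measure Ω) [IsProbabilityMeasure μ]
    (n : ℕ) (hn : 1 ≤ n) (G : Fin n → Ω → ℕ)
    (hmeas : ∀ j, Measurable (G j))
    (hindep : iIndepFun G μ)
    (hgeo : ∀ (j : Fin n) (k : ℕ), μ {ω | G j ω = k} = (2 : ENNReal)⁻¹ ^ (k + 1)) :
    ∫ ω, ((Finset.univ.sup fun j => G j ω : ℕ) : ℝ) ∂μ ≤ Real.logb 2 n + 1 := by
  set M : Ω → ℕ := fun ω => Finset.univ.sup fun j => G j ω with hMdef
  have hMmeas : Measurable M := by
    have : ∀ s : Finset (Fin n), Measurable (fun ω => s.sup fun j => G j ω) := by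
      intro s
      induction s using Finset.induction with
      | empty => simpa using measurable_const
      | insert _ _ h ih =>
          simp only [Finset.sup_insert]
          exact (hmeas _).sup ih
    exact this Finset.univ
  set m : ℕ := Nat.log 2 n with hmdef
  -- tail bound
  have htail : ∀ k : ℕ, μ {ω | k < M ω} ≤ (n : ENNReal) * (2:ENNReal)⁻¹ ^ (k + 1) := by
    intro k
    have hset : {ω | k < M ω} ⊆ ⋃ j : Fin n, {ω | k < G j ω} := by
      intro ω hω
      simp only [Set.mem_setOf_eq, hMdef, Finset.lt_sup_iff] at hω
      obtain ⟨j, -, hj⟩ := hω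
      exact Set.mem_iUnion.mpr ⟨j, hj⟩
    calc μ {ω | k < M ω} ≤ μ (⋃ j : Fin n, {ω | k < G j ω}) := measure_mono hset
      _ ≤ ∑ j : Fin n, μ {ω | k < G j ω} := measure_iUnion_fintype_le _ _
      _ = ∑ j : Fin n, (2:ENNReal)⁻¹ ^ (k + 1) := by
          refine Finset.sum_congr rfl fun j _ => ?_
          exact geom_tail' μ (G j) (hmeas j) (hgeo j) k
      _ = (n : ENNReal) * (2:ENNReal)⁻¹ ^ (k + 1) := by
          rw [Finset.sum_const, Finset.card_univ, Fintype.card_fin, nsmul_eq_mul]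
  -- key lintegral bound
  have hbound : ∫⁻ ω, (M ω : ENNReal) ∂μ ≤ (m : ENNReal) + (n : ENNReal) * (2:ENNReal)⁻¹ ^ m := by
    rw [lintegral_nat_eq_tsum' μ M hMmeas]
    set b1 : ℕ → ENNReal := fun k => if k < m then 1 else 0 with hb1
    set b2 : ℕ → ENNReal := fun k => if m ≤ k then (n : ENNReal) * (2:ENNReal)⁻¹ ^ (k + 1) else 0
      with hb2
    have hab : ∀ k : ℕ, μ {ω | k < M ω} ≤ b1 k + b2 k := by
      intro k
      by_cases hk : k < m
      · have : b1 k = 1 := by simp [hb1, hk]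
        calc μ {ω | k < M ω} ≤ 1 := prob_le_one
          _ ≤ b1 k + b2 k := by rw [this]; exact le_add_right le_rfl
      · have h2 : b2 k = (n : ENNReal) * (2:ENNReal)⁻¹ ^ (k + 1) := by
          simp [hb2, Nat.le_of_not_lt hk]
        calc μ {ω | k < M ω} ≤ (n : ENNReal) * (2:ENNReal)⁻¹ ^ (k + 1) := htail k
          _ ≤ b1 k + b2 k := by rw [h2]; exact le_add_left le_rfl
    have hs1 : ∑' k : ℕ, b1 k = (m : ENNReal) := by
      rw [tsum_eq_sum (s := Finset.range m) (fun k hk => by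
        simp [hb1, Finset.mem_range] at hk ⊢; omega)]
      rw [Finset.sum_congr rfl (fun k hk => by
        simp only [hb1]; rw [if_pos (Finset.mem_range.mp hk)])]
      simp
    have hs2 : ∑' k : ℕ, b2 k = (n : ENNReal) * (2:ENNReal)⁻¹ ^ m := by
      have hinj : Function.Injective (fun i : ℕ => i + m) := add_left_injective m
      have hzero : Function.support b2 ⊆ Set.range (fun i : ℕ => i + m) := by
        intro k hk
        rcases Nat.lt_or_ge k m with h | h
        · exact absurd (by simp [hb2, Nat.not_le.mpr h] : b2 k = 0) hk
        · exact ⟨k - m, by simpa using Nat.sub_add_cancel h⟩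
      rw [← hinj.tsum_eq hzero]
      have : ∀ i : ℕ, b2 (i + m) = ((n : ENNReal) * (2:ENNReal)⁻¹ ^ m) * (2:ENNReal)⁻¹ ^ (i + 1) := by
        intro i
        simp only [hb2, if_pos (Nat.le_add_left m i)]
        rw [mul_assoc, ← pow_add]
        ring_nf
      simp only [this]
      rw [ENNReal.tsum_mul_left]
      have hsum : ∑' i : ℕ, (2:ENNReal)⁻¹ ^ (i+1) = 1 := by
        simp_rw [pow_succ']
        rw [ENNReal.tsum_mul_left, ENNReal.tsum_geometric, ENNReal.one_sub_inv_two]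
        simp [ENNReal.inv_mul_cancel]
      rw [hsum, mul_one]
    calc ∑' k : ℕ, μ {ω | k < M ω} ≤ ∑' k : ℕ, (b1 k + b2 k) := ENNReal.tsum_le_tsum hab
      _ = ∑' k : ℕ, b1 k + ∑' k : ℕ, b2 k := ENNReal.tsum_add
      _ = (m : ENNReal) + (n : ENNReal) * (2:ENNReal)⁻¹ ^ m := by rw [hs1, hs2]
  -- convert to real integral
  have hBne : ((m : ENNReal) + (n : ENNReal) * (2:ENNReal)⁻¹ ^ m) ≠ ⊤ := by
    apply ENNReal.add_ne_top.mpr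
    constructor
    · exact ENNReal.natCast_ne_top m
    · exact ENNReal.mul_ne_top (ENNReal.natCast_ne_top n)
        (ENNReal.pow_ne_top (by simp))
  have hint_eq : ∫ ω, ((M ω : ℕ) : ℝ) ∂μ = (∫⁻ ω, (M ω : ENNReal) ∂μ).toReal := by
    have hsm : AEStronglyMeasurable (fun ω => ((M ω : ℕ) : ℝ)) μ :=
      Measurable.aestronglyMeasurable (measurable_from_top.comp hMmeas)
    rw [integral_eq_lintegral_of_nonneg_ae
      (Filter.Eventually.of_forall fun ω => Nat.cast_nonneg (M ω)) hsm]
    congr 1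
    refine lintegral_congr fun ω => ?_
    rw [ENNReal.ofReal_natCast]
  have hq : (∫⁻ ω, (M ω : ENNReal) ∂μ).toReal
      ≤ (m : ℝ) + (n : ℝ) * ((2:ℝ)⁻¹) ^ m := by
    calc (∫⁻ ω, (M ω : ENNReal) ∂μ).toReal
        ≤ ((m : ENNReal) + (n : ENNReal) * (2:ENNReal)⁻¹ ^ m).toReal :=
          ENNReal.toReal_mono hBne hbound
      _ = (m : ℝ) + (n : ℝ) * ((2:ℝ)⁻¹) ^ m := by
          rw [ENNReal.toReal_add (ENNReal.natCast_ne_top m)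
            (ENNReal.mul_ne_top (ENNReal.natCast_ne_top n) (ENNReal.pow_ne_top (by simp))),
            ENNReal.toReal_natCast, ENNReal.toReal_mul, ENNReal.toReal_natCast,
            ENNReal.toReal_pow, ENNReal.toReal_inv, ENNReal.toReal_ofNat]
  -- final real inequality
  have h2m : (2:ℝ) ^ m ≤ (n : ℝ) := by
    exact_mod_cast Nat.cast_le.mpr (Nat.pow_log_le_self 2 (by omega))
  have hn2 : (n : ℝ) < 2 ^ (m + 1) := by
    exact_mod_cast Nat.cast_lt.mpr (Nat.lt_pow_succ_log_self (by norm_num) n)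
  have h2mpos : (0:ℝ) < 2 ^ m := by positivity
  set x : ℝ := (n : ℝ) * ((2:ℝ)⁻¹) ^ m with hxdef
  have hx : x = (n : ℝ) / 2 ^ m := by rw [hxdef, inv_pow, div_eq_mul_inv]
  have hx1 : 1 ≤ x := by rw [hx, le_div_iff₀ h2mpos]; linarith
  have hx2 : x ≤ 2 := by
    rw [hx, div_le_iff₀ h2mpos]
    have : (2:ℝ) * 2 ^ m = 2 ^ (m+1) := by ring
    linarith [this ▸ hn2.le]
  have hxle := logb_aux' hx1 hx2
  have hlogx : Real.logb 2 x = Real.logb 2 n - m := by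
    rw [hx, Real.logb_div (by positivity) (by positivity), Real.logb_pow,
      Real.logb_self_eq_one (by norm_num), mul_one]
  have final : (m : ℝ) + x ≤ Real.logb 2 n + 1 := by linarith
  calc ∫ ω, ((M ω : ℕ) : ℝ) ∂μ = (∫⁻ ω, (M ω : ENNReal) ∂μ).toReal := hint_eq
    _ ≤ (m : ℝ) + x := hq
    _ ≤ Real.logb 2 n + 1 := final
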